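/- Let Q be a Hermitian operator on a finite-dimensional complex inner product space V and let γ₅ be a Hermitian involution with {γ₅, Q} = 0. Then trace(γ₅) = n₊ − n₋, where n₊ (resp. n₋) is the dimension of the subspace of ker Q on which γ₅ acts as +1 (resp. −1). -/

import Mathlib

open Module

/-- Rank–nullity in the form: `dim S = dim (ker f ⊓ S) + dim (f '' S)`. -/
lemma aux_rank {V : Type*} [NormedAddCommGroup V] [InnerProductSpace ℂ V]
    [FiniteDimensional ℂ V] (f : V →ₗ[ℂ] V) (S : Submodule ℂ V) :
    finrank ℂ S = finrank ℂ ↥(LinearMap.ker f ⊓ S) + finrank ℂ ↥(S.map f) := by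
  have h := LinearMap.finrank_range_add_finrank_ker (f.domRestrict S)
  rw [LinearMap.range_domRestrict, LinearMap.ker_domRestrict] at h
  have e1 : Submodule.comap S.subtype (LinearMap.ker f)
      = Submodule.comap S.subtype (LinearMap.ker f ⊓ S) := by
    ext x; simp [x.2]
  have e2 := (Submodule.comapSubtypeEquivOfLe
    (inf_le_right : LinearMap.ker f ⊓ S ≤ S)).finrank_eq
  rw [e1, e2] at h
  omega

/-- With `Q` Hermitian, `γ₅` a Hermitian involution anticommuting with `Q`,
`trace(γ₅) = n₊ − n₋`, where `n₊`/`n₋` are the dimensions of the `±1` eigenspaces of `γ₅`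
inside `ker Q`. -/
theorem trace_gamma5_eq_index
    {V : Type*} [NormedAddCommGroup V] [InnerProductSpace ℂ V] [FiniteDimensional ℂ V]
    (Q γ₅ : V →L[ℂ] V)
    (hQ : IsSelfAdjoint Q) (hγ₅sa : IsSelfAdjoint γ₅) (hγ₅sq : γ₅ * γ₅ = 1)
    (hanti : γ₅ * Q + Q * γ₅ = 0) :
    LinearMap.trace ℂ V (γ₅ : V →ₗ[ℂ] V)
      = (finrank ℂ
          ↥(LinearMap.ker (Q : V →ₗ[ℂ] V) ⊓
            LinearMap.ker ((γ₅ : V →ₗ[ℂ] V) - LinearMap.id)) : ℂ)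
        - (finrank ℂ
          ↥(LinearMap.ker (Q : V →ₗ[ℂ] V) ⊓
            LinearMap.ker ((γ₅ : V →ₗ[ℂ] V) + LinearMap.id)) : ℂ) := by
  classical
  set f : V →ₗ[ℂ] V := (γ₅ : V →ₗ[ℂ] V) with hf
  set q : V →ₗ[ℂ] V := (Q : V →ₗ[ℂ] V) with hq
  have hsq : ∀ x, f (f x) = x := by
    intro x
    have := congrArg (fun g : V →L[ℂ] V => g x) hγ₅sq
    simpa [hf] using this
  have hac : ∀ x, f (q x) = - q (f x) := by
    intro x
    have := congrArg (fun g : V →L[ℂ] V => g x) hanti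
    simp only [ContinuousLinearMap.add_apply, ContinuousLinearMap.mul_apply,
      ContinuousLinearMap.zero_apply] at this
    have := eq_neg_of_add_eq_zero_left this
    simpa [hf, hq] using this
  set Ep := LinearMap.ker (f - LinearMap.id) with hEp
  set Em := LinearMap.ker (f + LinearMap.id) with hEm
  have memEp : ∀ x, x ∈ Ep ↔ f x = x := by
    intro x
    simp [hEp, LinearMap.mem_ker, LinearMap.sub_apply, sub_eq_zero]
  have memEm : ∀ x, x ∈ Em ↔ f x = -x := by
    intro x
    simp [hEm, LinearMap.mem_ker, LinearMap.add_apply, add_eq_zero_iff_eq_neg]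
  clear_value f q Ep Em
  -- Q maps E₊ into E₋ and E₋ into E₊
  have hmapPM : Ep.map q ≤ Em := by
    rintro _ ⟨x, hx, rfl⟩
    rw [SetLike.mem_coe, memEp] at hx
    rw [memEm, hac x, hx]
  have hmapMP : Em.map q ≤ Ep := by
    rintro _ ⟨x, hx, rfl⟩
    rw [SetLike.mem_coe, memEm] at hx
    rw [memEp, hac x, hx, map_neg, neg_neg]
  -- no nonzero element of range Q lies in ker Q (self-adjointness)
  have hdisj : ∀ y : V, q (q y) = 0 → q y = 0 := by
    intro y h
    rw [hq] at h ⊢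
    have hadj : ContinuousLinearMap.adjoint Q = Q :=
      ContinuousLinearMap.isSelfAdjoint_iff'.mp hQ
    have : (inner ℂ (Q y) (Q y) : ℂ) = 0 := by
      calc (inner ℂ (Q y) (Q y) : ℂ)
          = inner ℂ (ContinuousLinearMap.adjoint Q (Q y)) y :=
            (ContinuousLinearMap.adjoint_inner_left Q y (Q y)).symm
        _ = inner ℂ (Q (Q y)) y := by rw [hadj]
        _ = 0 := by
            have hz : Q (Q y) = 0 := by simpa using h
            rw [hz, inner_zero_left]
    simpa using inner_self_eq_zero.mp this
  -- equal ranks of Q on the two eigenspaces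
  have key : ∀ S S' : Submodule ℂ V, S.map q ≤ S' →
      finrank ℂ ↥(S.map q) ≤ finrank ℂ ↥(S'.map q) := by
    intro S S' hle
    have h := aux_rank q (S.map q)
    have hbot : LinearMap.ker q ⊓ S.map q = ⊥ := by
      rw [eq_bot_iff]
      rintro x ⟨hx1, y, hy, rfl⟩
      have : q y = 0 := hdisj y hx1
      simp [this]
    rw [hbot] at h
    simp only [finrank_bot, zero_add] at h
    rw [h]
    exact Submodule.finrank_mono (Submodule.map_mono hle)
  have hr : finrank ℂ ↥(Ep.map q) = finrank ℂ ↥(Em.map q) :=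
    le_antisymm
      (by simpa using key Ep Em hmapPM)
      (by simpa using key Em Ep hmapMP)
  -- rank–nullity on the eigenspaces
  have hrkP := aux_rank q Ep
  have hrkM := aux_rank q Em
  -- trace of an involution
  set P : V →ₗ[ℂ] V := (2 : ℂ)⁻¹ • (LinearMap.id + f) with hP
  have hPmem : ∀ x, P x ∈ Ep := by
    intro x
    rw [memEp]
    simp only [hP, LinearMap.smul_apply, LinearMap.add_apply, LinearMap.id_apply]
    rw [map_smul, map_add, hsq]
    rw [add_comm]
  have hPid : ∀ x ∈ Ep, P x = x := by
    intro x hx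
    rw [memEp] at hx
    simp only [hP, LinearMap.smul_apply, LinearMap.add_apply, LinearMap.id_apply, hx]
    rw [← two_smul ℂ x, smul_smul, inv_mul_cancel₀ (two_ne_zero), one_smul]
  have hProj : LinearMap.IsProj Ep P := ⟨hPmem, hPid⟩
  have htrP : LinearMap.trace ℂ V P = (finrank ℂ Ep : ℂ) := hProj.trace
  have hfP : f = (2 : ℂ) • P - LinearMap.id := by
    rw [hP, smul_smul, mul_inv_cancel₀ (two_ne_zero), one_smul]
    abel
  have htrf : LinearMap.trace ℂ V f
      = 2 * (finrank ℂ Ep : ℂ) - (finrank ℂ V : ℂ) := by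
    rw [hfP, map_sub, map_smul, htrP, LinearMap.trace_id, smul_eq_mul]
  -- dim V = dim E₊ + dim E₋
  have hrange : LinearMap.range (f - LinearMap.id) = Em := by
    apply le_antisymm
    · rintro _ ⟨x, rfl⟩
      rw [memEm]
      simp only [LinearMap.sub_apply, LinearMap.id_apply]
      rw [map_sub, hsq]
      abel
    · intro x hx
      rw [memEm] at hx
      refine ⟨-((2 : ℂ)⁻¹ • x), ?_⟩
      simp only [LinearMap.sub_apply, LinearMap.id_apply, map_neg, map_smul, hx]
      have hxx : -x - x = -((2 : ℂ) • x) := by rw [two_smul]; abel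
      rw [hxx, smul_neg, neg_neg, smul_smul, inv_mul_cancel₀ (two_ne_zero), one_smul]
  have hdim : finrank ℂ V = finrank ℂ Ep + finrank ℂ Em := by
    have h := LinearMap.finrank_range_add_finrank_ker (f - LinearMap.id)
    rw [hrange, ← hEp] at h
    omega
  -- wrap up
  rw [htrf]
  have : finrank ℂ ↥(LinearMap.ker q ⊓ Ep) + finrank ℂ Em
      = finrank ℂ ↥(LinearMap.ker q ⊓ Em) + finrank ℂ Ep := by
    omega
  have hfin : (finrank ℂ ↥(LinearMap.ker q ⊓ Ep) : ℂ) + (finrank ℂ Em : ℂ)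
      = (finrank ℂ ↥(LinearMap.ker q ⊓ Em) : ℂ) + (finrank ℂ Ep : ℂ) := by
    exact_mod_cast congrArg (fun n : ℕ => (n : ℂ)) this
  have hdimC : (finrank ℂ V : ℂ) = (finrank ℂ Ep : ℂ) + (finrank ℂ Em : ℂ) := by
    exact_mod_cast congrArg (fun n : ℕ => (n : ℂ)) hdim
  rw [hdimC]
  linear_combination -hfin
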